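/- Let S be a finite index set and for each i ∈ S let κ_i : ℝ → Set(ℝ^d) be a nested convex family (each κ_i(λ) compact and convex, κ_i monotone, and κ_i(λ) = ⋂_{λ'>λ} κ_i(λ') for every λ). For T ⊆ S let λ(T) = inf{λ ∈ ℝ | ⋂_{i∈T} κ_i(λ) ≠ ∅}. Suppose {λ | ⋂_{i∈S} κ_i(λ) ≠ ∅} is nonempty and bounded below. Then there exists a subset B ⊆ S with |B| ≤ d + 1 such that {λ | ⋂_{i∈B} κ_i(λ) ≠ ∅} is bounded below and λ(B) = λ(S). -/

import Mathlib

/-- The value of a quasiconvex program is determined by a subfamily of at most `d + 1` of the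
nested convex families. -/
theorem exists_small_subfamily_same_value (d : ℕ) {ι : Type*} [Fintype ι]
    (κ : ι → ℝ → Set (EuclideanSpace ℝ (Fin d)))
    (hcompact : ∀ i l, IsCompact (κ i l))
    (hconvex : ∀ i l, Convex ℝ (κ i l))
    (hmono : ∀ i, Monotone (κ i))
    (hrc : ∀ i l, κ i l = ⋂ l' ∈ Set.Ioi l, κ i l')
    (hne : {l : ℝ | (⋂ i, κ i l).Nonempty}.Nonempty)
    (hbdd : BddBelow {l : ℝ | (⋂ i, κ i l).Nonempty}) :
    ∃ B : Finset ι, B.card ≤ d + 1 ∧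
      BddBelow {l : ℝ | (⋂ i ∈ B, κ i l).Nonempty} ∧
      sInf {l : ℝ | (⋂ i ∈ B, κ i l).Nonempty} = sInf {l : ℝ | (⋂ i, κ i l).Nonempty} := by
  classical
  -- ι is nonempty, otherwise the full set is `univ` and cannot be bounded below
  rcases isEmpty_or_nonempty ι with hι | hι
  · exfalso
    have : {l : ℝ | (⋂ i, κ i l).Nonempty} = Set.univ := by
      ext l; simp [Set.iInter_of_empty, Set.univ_nonempty]
    rw [this] at hbdd
    exact not_bddBelow_univ hbdd
  obtain ⟨i0⟩ := hι
  set A := {l : ℝ | (⋂ i, κ i l).Nonempty} with hA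
  set lam := sInf A with hlam
  have hup : ∀ {a b : ℝ}, a ∈ A → a ≤ b → b ∈ A := by
    rintro a b ⟨x, hx⟩ hab
    exact ⟨x, Set.mem_iInter.2 fun i => hmono i hab (Set.mem_iInter.1 hx i)⟩
  have hgt : ∀ l, lam < l → l ∈ A := by
    intro l hl
    obtain ⟨a, ha, hal⟩ := exists_lt_of_csInf_lt hne hl
    exact hup ha hal.le
  have hlb : ∀ l ∈ A, lam ≤ l := fun l hl => csInf_le hbdd hl
  -- the value `lam` is attained
  have hlamA : lam ∈ A := by
    have hC : (⋂ n : ℕ, ⋂ i, κ i (lam + 1 / (n + 1))).Nonempty := by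
      apply IsCompact.nonempty_iInter_of_sequence_nonempty_isCompact_isClosed
      · intro n
        refine Set.iInter_mono fun i => hmono i ?_
        have : (1 : ℝ) / (n + 1 + 1) ≤ 1 / (n + 1) := by
          apply one_div_le_one_div_of_le
          · positivity
          · linarith
        push_cast
        linarith
      · intro n
        refine hgt _ ?_
        have : (0 : ℝ) < 1 / (n + 1) := by positivity
        linarith
      · exact IsCompact.of_isClosed_subset (hcompact i0 _)
          (isClosed_iInter fun i => (hcompact i _).isClosed) (Set.iInter_subset _ i0)
      · exact fun n => isClosed_iInter fun i => (hcompact i _).isClosed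
    obtain ⟨x, hx⟩ := hC
    refine ⟨x, Set.mem_iInter.2 fun i => ?_⟩
    rw [hrc i lam]
    refine Set.mem_iInter₂.2 fun l' hl' => ?_
    obtain ⟨n, hn⟩ := exists_nat_one_div_lt (sub_pos.2 (Set.mem_Ioi.1 hl') : (0 : ℝ) < l' - lam)
    have hx' : x ∈ κ i (lam + 1 / (n + 1)) :=
      Set.mem_iInter.1 (Set.mem_iInter.1 hx n) i
    exact hmono i (by linarith) hx'
  -- for each n, a small subfamily with empty intersection below `lam`
  have hHelly : ∀ n : ℕ, ∃ I : Finset ι, I.card ≤ d + 1 ∧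
      ¬(⋂ i ∈ I, κ i (lam - 1 / (n + 1))).Nonempty := by
    intro n
    by_contra h
    push_neg at h
    have hfull : (⋂ i, κ i (lam - 1 / (n + 1))).Nonempty := by
      apply Convex.helly_theorem_compact' (𝕜 := ℝ) (fun i => hconvex i _)
        (fun i => hcompact i _)
      intro I hI
      rw [finrank_euclideanSpace_fin] at hI
      by_contra hI'
      exact absurd (h I hI) hI'
    have : lam ≤ lam - 1 / (n + 1) := hlb _ hfull
    have : (0 : ℝ) < 1 / (n + 1) := by positivity
    linarith
  choose f hfcard hfempty using hHelly
  obtain ⟨B, hB⟩ := Finite.exists_infinite_fiber f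
  have hBinf : (f ⁻¹' {B}).Infinite := Set.infinite_coe_iff.1 hB
  refine ⟨B, ?_, ?_, ?_⟩
  · obtain ⟨n, hn⟩ := hBinf.nonempty
    have hn' : f n = B := hn
    exact hn' ▸ hfcard n
  all_goals {
    have hBlb : ∀ l ∈ {l : ℝ | (⋂ i ∈ B, κ i l).Nonempty}, lam ≤ l := by
      intro l hl
      by_contra hll
      push_neg at hll
      obtain ⟨n, hn⟩ := exists_nat_one_div_lt (sub_pos.2 hll)
      obtain ⟨m, hm, hnm⟩ := hBinf.exists_gt n
      have h1 : (1 : ℝ) / (m + 1) ≤ 1 / (n + 1) := by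
        apply one_div_le_one_div_of_le
        · positivity
        · have : (n : ℝ) < m := by exact_mod_cast hnm
          linarith
      have hsub : (⋂ i ∈ B, κ i l) ⊆ ⋂ i ∈ B, κ i (lam - 1 / (m + 1)) :=
        Set.iInter₂_mono fun i _ => hmono i (by linarith)
      have hm' : f m = B := hm
      have := hfempty m
      rw [hm'] at this
      exact this (hl.mono hsub)
    have hBmem : lam ∈ {l : ℝ | (⋂ i ∈ B, κ i l).Nonempty} :=
      hlamA.mono fun x hx => Set.mem_iInter₂.2 fun i _ => Set.mem_iInter.1 hx i
    first
    | exact ⟨lam, hBlb⟩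
    | exact (IsLeast.csInf_eq ⟨hBmem, hBlb⟩)
  }
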